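/- Let N ≥ 1 be an integer, 1 < p < q, and let v be a radial Neumann solution with exponent q. Then the energy E_q(v) := ∫_0^1 r^{N−1}( v'(r)^p/p + v(r)^p/p − v(r)^q/q ) dr satisfies E_q(v) ≤ (1/p)·∫_0^1 r^{N−1}( v'(r)^p + v(r)^p ) dr ≤ (1/(pN))·(q/p)^{p/(q−p)}. -/

import Mathlib

open Real Set Filter intervalIntegral

/-- `v : [0,1] → ℝ` is a radial Neumann solution with exponent `q` of
`-Δ_p v + v^{p-1} = v^{q-1}` in the unit ball of `ℝ^N`, in the cone of positive,
radially nondecreasing functions; `v'` is its derivative on `[0,1]`. -/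
def IsRadialNeumannSol (N : ℕ) (p q : ℝ) (v v' : ℝ → ℝ) : Prop :=
  (∀ r ∈ Set.Icc (0:ℝ) 1, HasDerivWithinAt v (v' r) (Set.Icc (0:ℝ) 1) r) ∧
  ContinuousOn v' (Set.Icc (0:ℝ) 1) ∧
  (∀ r ∈ Set.Icc (0:ℝ) 1, 0 < v r) ∧
  MonotoneOn v (Set.Icc (0:ℝ) 1) ∧
  (∀ r ∈ Set.Icc (0:ℝ) 1, 0 ≤ v' r) ∧
  v' 0 = 0 ∧ v' 1 = 0 ∧
  (∀ r ∈ Set.Ioo (0:ℝ) 1,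
    HasDerivAt (fun s => s ^ (N - 1) * v' s ^ (p - 1))
      (r ^ (N - 1) * (v r ^ (p - 1) - v r ^ (q - 1))) r)

/-- Improved energy estimate: for a radial Neumann solution `v`,
`E_q(v) ≤ (1/p)∫₀¹ r^{N-1}(v'^p + v^p) dr ≤ (1/(pN))·(q/p)^{p/(q-p)}`. -/
theorem improved_energy_estimate
    (N : ℕ) (hN : 1 ≤ N) (p q : ℝ) (hp : 1 < p) (hpq : p < q)
    (v v' : ℝ → ℝ) (hsol : IsRadialNeumannSol N p q v v') :
    (∫ r in (0:ℝ)..1, r ^ (N - 1) * (v' r ^ p / p + v r ^ p / p - v r ^ q / q)) ≤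
      (1 / p) * ∫ r in (0:ℝ)..1, r ^ (N - 1) * (v' r ^ p + v r ^ p) ∧
    (1 / p) * (∫ r in (0:ℝ)..1, r ^ (N - 1) * (v' r ^ p + v r ^ p)) ≤
      (1 / (p * (N : ℝ))) * (q / p) ^ (p / (q - p)) := by
  obtain ⟨hv, hv'c, hvpos, hvmono, hv'nn, hv'0, hv'1, hode⟩ := hsol
  have hp0 : (0:ℝ) < p := lt_trans one_pos hp
  have hq0 : (0:ℝ) < q := lt_trans hp0 hpq
  have hp1 : (0:ℝ) < p - 1 := by linarith
  have hqp : (0:ℝ) < q - p := by linarith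
  have huIcc : uIcc (0:ℝ) 1 = Icc 0 1 := uIcc_of_le zero_le_one
  have h01 : (0:ℝ) ∈ Icc (0:ℝ) 1 := ⟨le_refl 0, zero_le_one⟩
  have h11 : (1:ℝ) ∈ Icc (0:ℝ) 1 := ⟨zero_le_one, le_refl 1⟩
  have hvc : ContinuousOn v (Icc 0 1) := fun r hr => (hv r hr).continuousWithinAt
  -- continuity of all powers
  have cvp : ContinuousOn (fun r => v r ^ p) (Icc 0 1) :=
    hvc.rpow_const (fun r hr => Or.inl (hvpos r hr).ne')
  have cvq : ContinuousOn (fun r => v r ^ q) (Icc 0 1) :=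
    hvc.rpow_const (fun r hr => Or.inl (hvpos r hr).ne')
  have cvp1 : ContinuousOn (fun r => v r ^ (p-1)) (Icc 0 1) :=
    hvc.rpow_const (fun r hr => Or.inl (hvpos r hr).ne')
  have cvq1 : ContinuousOn (fun r => v r ^ (q-1)) (Icc 0 1) :=
    hvc.rpow_const (fun r hr => Or.inl (hvpos r hr).ne')
  have cv'p : ContinuousOn (fun r => v' r ^ p) (Icc 0 1) :=
    hv'c.rpow_const (fun r hr => Or.inr hp0.le)
  have cv'p1 : ContinuousOn (fun r => v' r ^ (p-1)) (Icc 0 1) :=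
    hv'c.rpow_const (fun r hr => Or.inr hp1.le)
  have cpow : ContinuousOn (fun r : ℝ => r ^ (N-1)) (Icc 0 1) := (continuous_pow _).continuousOn
  -- the function W r = r^(N-1) * v' r^(p-1)
  set W : ℝ → ℝ := fun s => s ^ (N - 1) * v' s ^ (p - 1) with hW
  have hWc : ContinuousOn W (Icc 0 1) := cpow.mul cv'p1
  have hW0 : W 0 = 0 := by
    simp only [hW, hv'0, Real.zero_rpow hp1.ne', mul_zero]
  have hW1 : W 1 = 0 := by
    simp only [hW, hv'1, Real.zero_rpow hp1.ne', mul_zero]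
  -- integrability helpers
  have intD : IntervalIntegrable (fun r => r ^ (N-1) * (v r ^ (p-1) - v r ^ (q-1)))
      MeasureTheory.volume 0 1 := by
    apply ContinuousOn.intervalIntegrable; rw [huIcc]; exact cpow.mul (cvp1.sub cvq1)
  -- D identity
  have hD : ∫ r in (0:ℝ)..1, r ^ (N-1) * (v r ^ (p-1) - v r ^ (q-1)) = 0 := by
    rw [integral_eq_sub_of_hasDeriv_right_of_le zero_le_one hWc
      (fun r hr => (hode r hr).hasDerivWithinAt) intD, hW0, hW1, sub_zero]
  -- v 0 ≤ 1
  have hv01 : v 0 ≤ 1 := by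
    by_contra hgt
    push_neg at hgt
    have hpos : ∀ r ∈ Ioo (0:ℝ) 1, 0 < r ^ (N-1) * (v r ^ (q-1) - v r ^ (p-1)) := by
      intro r hr
      have hrIcc : r ∈ Icc (0:ℝ) 1 := Ioo_subset_Icc_self hr
      have h1v : 1 < v r := lt_of_lt_of_le hgt (hvmono h01 hrIcc hr.1.le)
      have : v r ^ (p-1) < v r ^ (q-1) :=
        Real.rpow_lt_rpow_of_exponent_lt h1v (by linarith)
      have hr0 : 0 < r ^ (N-1) := pow_pos hr.1 _
      nlinarith
    have : 0 < ∫ r in (0:ℝ)..1, r ^ (N-1) * (v r ^ (q-1) - v r ^ (p-1)) := by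
      apply intervalIntegral_pos_of_pos_on _ hpos one_pos
      apply ContinuousOn.intervalIntegrable; rw [huIcc]; exact cpow.mul (cvq1.sub cvp1)
    have heq : ∫ r in (0:ℝ)..1, r ^ (N-1) * (v r ^ (q-1) - v r ^ (p-1))
        = - ∫ r in (0:ℝ)..1, r ^ (N-1) * (v r ^ (p-1) - v r ^ (q-1)) := by
      rw [← intervalIntegral.integral_neg]
      congr 1; funext r; ring
    rw [heq, hD, neg_zero] at this
    exact lt_irrefl 0 this
  -- derivative of v at interior points
  have hvAt : ∀ r ∈ Ioo (0:ℝ) 1, HasDerivAt v (v' r) r := fun r hr =>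
    (hv r (Ioo_subset_Icc_self hr)).hasDerivAt (Icc_mem_nhds hr.1 hr.2)
  -- derivative of v'^(p-1) at interior points
  have hG : ∀ r ∈ Ioo (0:ℝ) 1, HasDerivAt (fun s => v' s ^ (p-1))
      ((v r ^ (p-1) - v r ^ (q-1)) - (N-1 : ℕ) * v' r ^ (p-1) / r) r := by
    intro r hr
    have hr0 : (0:ℝ) < r := hr.1
    have hrn : r ^ (N-1) ≠ 0 := pow_ne_zero _ hr0.ne'
    have hinv : HasDerivAt (fun s : ℝ => (s ^ (N-1))⁻¹)
        (-((N-1 : ℕ) * r ^ (N-1-1)) / (r^(N-1))^2) r := (hasDerivAt_pow (N-1) r).inv hrn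
    have hmul := (hode r hr).mul hinv
    have heq : (fun s => v' s ^ (p-1)) =ᶠ[nhds r]
        (fun s => (s ^ (N-1) * v' s ^ (p-1)) * (s^(N-1))⁻¹) := by
      filter_upwards [Ioi_mem_nhds hr0] with s hs
      have : (s:ℝ) ^ (N-1) ≠ 0 := pow_ne_zero _ (ne_of_gt hs)
      field_simp
    have h2 := hmul.congr_of_eventuallyEq heq
    refine h2.congr_deriv (Eq.symm ?_)
    rcases Nat.eq_zero_or_pos (N-1) with h | h
    · rw [h]; push_cast; simp
    · obtain ⟨m, hm⟩ := Nat.exists_eq_add_of_le h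
      simp only [hW]
      rw [hm]
      simp only [Nat.add_sub_cancel_left, Nat.add_sub_cancel]
      have hrm : r ^ (1+m) ≠ 0 := pow_ne_zero _ hr0.ne'
      field_simp
      ring
  -- derivative of v'^p at interior points
  have hK : ∀ r ∈ Ioo (0:ℝ) 1, HasDerivAt (fun s => v' s ^ p)
      ((p/(p-1)) * v' r * ((v r ^ (p-1) - v r ^ (q-1)) - (N-1 : ℕ) * v' r ^ (p-1) / r)) r := by
    intro r hr
    have h1le : (1:ℝ) ≤ p/(p-1) := by
      rw [le_div_iff₀ hp1]; linarith
    have hcomp := (hG r hr).rpow_const (Or.inr h1le)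
    have heq : (fun s => v' s ^ p) =ᶠ[nhds r]
        (fun s => (v' s ^ (p-1)) ^ (p/(p-1))) := by
      filter_upwards [Ioo_mem_nhds hr.1 hr.2] with s hs
      rw [← Real.rpow_mul (hv'nn s (Ioo_subset_Icc_self hs))]
      congr 1
      field_simp
    have h2 := hcomp.congr_of_eventuallyEq heq
    refine h2.congr_deriv (Eq.symm ?_)
    have hsimp : (v' r ^ (p-1)) ^ (p/(p-1) - 1) = v' r := by
      rw [← Real.rpow_mul (hv'nn r (Ioo_subset_Icc_self hr))]
      have : (p-1) * (p/(p-1) - 1) = 1 := by field_simp; ring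
      rw [this, Real.rpow_one]
    rw [hsimp]; ring
  -- the Hamiltonian
  set H : ℝ → ℝ := fun s => ((p-1)/p) * v' s ^ p + v s ^ q / q - v s ^ p / p with hHdef
  have hHanti : AntitoneOn H (Icc 0 1) := by
    apply antitoneOn_of_hasDerivWithinAt_nonpos (convex_Icc 0 1)
      (f' := fun x => -((N-1 : ℕ) * v' x ^ p / x))
    · exact ((cv'p.const_smul ((p-1)/p)).add (cvq.div_const q)).sub (cvp.div_const p)
    · intro x hx
      rw [interior_Icc] at hx
      have hvx := (hvpos x (Ioo_subset_Icc_self hx)).ne'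
      have hd : HasDerivAt H
          (((p-1)/p) * ((p/(p-1)) * v' x * ((v x ^ (p-1) - v x ^ (q-1)) - (N-1 : ℕ) * v' x ^ (p-1) / x))
           + (v' x * q * v x ^ (q-1)) / q - (v' x * p * v x ^ (p-1)) / p) x := by
        exact ((((hK x hx).const_mul ((p-1)/p)).add
          (((hvAt x hx).rpow_const (Or.inl hvx)).div_const q)).sub
          (((hvAt x hx).rpow_const (Or.inl hvx)).div_const p))
      have hval : ((p-1)/p) * ((p/(p-1)) * v' x * ((v x ^ (p-1) - v x ^ (q-1)) - (N-1 : ℕ) * v' x ^ (p-1) / x))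
           + (v' x * q * v x ^ (q-1)) / q - (v' x * p * v x ^ (p-1)) / p
           = -((N-1 : ℕ) * v' x ^ p / x) := by
        have hvp : v' x ^ p = v' x ^ (p-1) * v' x := by
          rcases eq_or_ne (v' x) 0 with h0 | h0
          · rw [h0, Real.zero_rpow hp0.ne', mul_zero]
          · rw [← Real.rpow_add_one h0]
            congr 1; ring
        rw [hvp]
        have hx0 : x ≠ 0 := ne_of_gt hx.1
        field_simp
        ring
      rw [hval] at hd
      exact hd.hasDerivWithinAt
    · intro x hx
      rw [interior_Icc] at hx
      have h1 : 0 ≤ v' x ^ p := Real.rpow_nonneg (hv'nn x (Ioo_subset_Icc_self hx)) _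
      have h2 : (0:ℝ) ≤ (N-1 : ℕ) := Nat.cast_nonneg _
      have := div_nonneg (mul_nonneg h2 h1) hx.1.le
      linarith
  -- v 1 ≤ M
  set M : ℝ := (q/p) ^ ((1:ℝ)/(q-p)) with hMdef
  have hqp1 : (1:ℝ) < q / p := (one_lt_div hp0).mpr hpq
  have hM0 : 0 < M := Real.rpow_pos_of_pos (by positivity) _
  have hv1M : v 1 ≤ M := by
    have h10 : H 1 ≤ H 0 := hHanti h01 h11 zero_le_one
    have hH1 : H 1 = v 1 ^ q / q - v 1 ^ p / p := by
      simp only [hHdef, hv'1, Real.zero_rpow hp0.ne', mul_zero, zero_add]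
    have hH0 : H 0 = v 0 ^ q / q - v 0 ^ p / p := by
      simp only [hHdef, hv'0, Real.zero_rpow hp0.ne', mul_zero, zero_add]
    have hphi0 : v 0 ^ q / q - v 0 ^ p / p ≤ 0 := by
      have hv00 : 0 < v 0 := hvpos 0 h01
      have h1 : v 0 ^ q ≤ v 0 ^ p := Real.rpow_le_rpow_of_exponent_ge hv00 hv01 hpq.le
      have h2 : 0 ≤ v 0 ^ p := Real.rpow_nonneg hv00.le _
      have h3 : v 0 ^ q / q ≤ v 0 ^ p / q := by gcongr
      have h4 : v 0 ^ p / q ≤ v 0 ^ p / p := by gcongr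
      linarith
    rw [hH1, hH0] at h10
    have hv10 : 0 < v 1 := hvpos 1 h11
    -- v1^q ≤ (q/p) v1^p
    have hkey : v 1 ^ q ≤ (q/p) * v 1 ^ p := by
      have : v 1 ^ q / q ≤ v 1 ^ p / p := by linarith
      rw [div_le_div_iff₀ hq0 hp0] at this
      rw [div_mul_eq_mul_div, le_div_iff₀ hp0]
      linarith
    have hsplit : v 1 ^ q = v 1 ^ (q-p) * v 1 ^ p := by
      rw [← Real.rpow_add hv10]; congr 1; ring
    have hvp0 : 0 < v 1 ^ p := Real.rpow_pos_of_pos hv10 _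
    have hqpb : v 1 ^ (q-p) ≤ q/p := by
      rw [hsplit] at hkey
      exact le_of_mul_le_mul_right (by linarith [hkey]) hvp0
    calc v 1 = (v 1 ^ (q-p)) ^ ((1:ℝ)/(q-p)) := by
          rw [← Real.rpow_mul hv10.le]
          rw [mul_one_div, div_self hqp.ne', Real.rpow_one]
      _ ≤ M := Real.rpow_le_rpow (Real.rpow_nonneg hv10.le _) hqpb (by positivity)
  have hvM : ∀ r ∈ Icc (0:ℝ) 1, v r ≤ M := fun r hr =>
    le_trans (hvmono hr h11 hr.2) hv1M
  -- integration by parts: ∫ r^(N-1)(v'^p + v^p) = ∫ r^(N-1) v^q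
  have intF' : IntervalIntegrable (fun r => r ^ (N-1) * (v r ^ p - v r ^ q + v' r ^ p))
      MeasureTheory.volume 0 1 := by
    apply ContinuousOn.intervalIntegrable; rw [huIcc]
    exact cpow.mul ((cvp.sub cvq).add cv'p)
  have int1 : IntervalIntegrable (fun r => r ^ (N-1) * (v' r ^ p + v r ^ p))
      MeasureTheory.volume 0 1 := by
    apply ContinuousOn.intervalIntegrable; rw [huIcc]
    exact cpow.mul (cv'p.add cvp)
  have int2 : IntervalIntegrable (fun r => r ^ (N-1) * v r ^ q)
      MeasureTheory.volume 0 1 := by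
    apply ContinuousOn.intervalIntegrable; rw [huIcc]
    exact cpow.mul cvq
  have hIBP : ∫ r in (0:ℝ)..1, r ^ (N-1) * (v r ^ p - v r ^ q + v' r ^ p) = 0 := by
    have hder : ∀ r ∈ Ioo (0:ℝ) 1, HasDerivWithinAt (fun s => W s * v s)
        (r ^ (N-1) * (v r ^ p - v r ^ q + v' r ^ p)) (Ioi r) r := by
      intro r hr
      have hd := (hode r hr).mul (hvAt r hr)
      have hvr := (hvpos r (Ioo_subset_Icc_self hr)).ne'
      have hval : r ^ (N-1) * (v r ^ (p-1) - v r ^ (q-1)) * v r + W r * v' r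
          = r ^ (N-1) * (v r ^ p - v r ^ q + v' r ^ p) := by
        have e1 : v r ^ (p-1) * v r = v r ^ p := by
          rw [← Real.rpow_add_one hvr]; congr 1; ring
        have e2 : v r ^ (q-1) * v r = v r ^ q := by
          rw [← Real.rpow_add_one hvr]; congr 1; ring
        have e3 : v' r ^ (p-1) * v' r = v' r ^ p := by
          rcases eq_or_ne (v' r) 0 with h0 | h0
          · rw [h0, mul_zero, Real.zero_rpow hp0.ne']
          · rw [← Real.rpow_add_one h0]; congr 1; ring
        simp only [hW]
        rw [← e1, ← e2, ← e3]; ring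
      rw [hval] at hd
      exact hd.hasDerivWithinAt
    rw [integral_eq_sub_of_hasDeriv_right_of_le zero_le_one (hWc.mul hvc) hder intF']
    rw [show (W * v) 1 - (W * v) 0 = 0 by simp only [Pi.mul_apply]; rw [hW0, hW1]; ring]
  have hC : ∫ r in (0:ℝ)..1, r ^ (N-1) * (v' r ^ p + v r ^ p)
      = ∫ r in (0:ℝ)..1, r ^ (N-1) * v r ^ q := by
    have := intervalIntegral.integral_sub int1 int2
    have heq2 : ∫ r in (0:ℝ)..1, (r ^ (N-1) * (v' r ^ p + v r ^ p) - r ^ (N-1) * v r ^ q)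
        = ∫ r in (0:ℝ)..1, r ^ (N-1) * (v r ^ p - v r ^ q + v' r ^ p) := by
      congr 1; funext r; ring
    rw [heq2, hIBP] at this
    linarith [this.symm]
  -- ∫ r^(N-1) v^{q-1} = ∫ r^(N-1) v^{p-1}
  have intq1 : IntervalIntegrable (fun r => r ^ (N-1) * v r ^ (q-1))
      MeasureTheory.volume 0 1 := by
    apply ContinuousOn.intervalIntegrable; rw [huIcc]; exact cpow.mul cvq1
  have intp1 : IntervalIntegrable (fun r => r ^ (N-1) * v r ^ (p-1))
      MeasureTheory.volume 0 1 := by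
    apply ContinuousOn.intervalIntegrable; rw [huIcc]; exact cpow.mul cvp1
  have hDD : ∫ r in (0:ℝ)..1, r ^ (N-1) * v r ^ (q-1)
      = ∫ r in (0:ℝ)..1, r ^ (N-1) * v r ^ (p-1) := by
    have := intervalIntegral.integral_sub intp1 intq1
    have heq2 : ∫ r in (0:ℝ)..1, (r ^ (N-1) * v r ^ (p-1) - r ^ (N-1) * v r ^ (q-1))
        = ∫ r in (0:ℝ)..1, r ^ (N-1) * (v r ^ (p-1) - v r ^ (q-1)) := by
      congr 1; funext r; ring
    rw [heq2, hD] at this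
    linarith [this.symm]
  -- ∫ r^(N-1) = 1/N
  have hRN : ∫ r in (0:ℝ)..1, r ^ (N-1) = 1 / (N:ℝ) := by
    rw [integral_pow]
    have hNN : ((N:ℝ) - 1) + 1 = (N:ℝ) := by ring
    rw [one_pow, zero_pow (Nat.succ_ne_zero _)]
    rw [Nat.cast_sub hN]
    push_cast
    rw [hNN]
    ring
  -- chain of bounds
  have hNpos : (0:ℝ) < N := by exact_mod_cast Nat.pos_of_ne_zero (by omega)
  have step1 : ∫ r in (0:ℝ)..1, r ^ (N-1) * v r ^ q
      ≤ M * ∫ r in (0:ℝ)..1, r ^ (N-1) * v r ^ (q-1) := by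
    rw [← intervalIntegral.integral_const_mul]
    apply intervalIntegral.integral_mono_on zero_le_one int2
    · exact (intq1.const_mul M)
    · intro x hx
      have hvx : 0 < v x := hvpos x hx
      have e : v x ^ q = v x ^ (q-1) * v x := by
        rw [← Real.rpow_add_one hvx.ne']; congr 1; ring
      rw [e]
      have h1 : 0 ≤ x ^ (N-1) := pow_nonneg hx.1 _
      have h2 : 0 ≤ v x ^ (q-1) := Real.rpow_nonneg hvx.le _
      have h3 : v x ≤ M := hvM x hx
      calc x ^ (N-1) * (v x ^ (q-1) * v x) ≤ x ^ (N-1) * (v x ^ (q-1) * M) := by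
            apply mul_le_mul_of_nonneg_left _ h1
            exact mul_le_mul_of_nonneg_left h3 h2
        _ = M * (x ^ (N-1) * v x ^ (q-1)) := by ring
  have step2 : ∫ r in (0:ℝ)..1, r ^ (N-1) * v r ^ (p-1) ≤ M ^ (p-1) * (1/(N:ℝ)) := by
    have hb : ∫ r in (0:ℝ)..1, r ^ (N-1) * v r ^ (p-1)
        ≤ ∫ r in (0:ℝ)..1, M ^ (p-1) * r ^ (N-1) := by
      apply intervalIntegral.integral_mono_on zero_le_one intp1
      · exact ((continuous_pow (N-1)).continuousOn.intervalIntegrable).const_mul _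
      · intro x hx
        have h1 : 0 ≤ x ^ (N-1) := pow_nonneg hx.1 _
        have h2 : v x ^ (p-1) ≤ M ^ (p-1) :=
          Real.rpow_le_rpow (hvpos x hx).le (hvM x hx) hp1.le
        calc x ^ (N-1) * v x ^ (p-1) ≤ x ^ (N-1) * M ^ (p-1) :=
              mul_le_mul_of_nonneg_left h2 h1
          _ = M ^ (p-1) * x ^ (N-1) := by ring
    rw [intervalIntegral.integral_const_mul, hRN] at hb
    exact hb
  have hMM : M * M ^ (p-1) = (q/p) ^ (p/(q-p)) := by
    have e1 : M * M ^ (p-1) = M ^ p := by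
      nth_rewrite 1 [← Real.rpow_one M]
      rw [← Real.rpow_add hM0]; congr 1; ring
    rw [e1, hMdef, ← Real.rpow_mul (by positivity : (0:ℝ) ≤ q/p)]
    congr 1; field_simp
  have main2 : ∫ r in (0:ℝ)..1, r ^ (N-1) * (v' r ^ p + v r ^ p)
      ≤ (q/p) ^ (p/(q-p)) * (1/(N:ℝ)) := by
    rw [hC]
    calc ∫ r in (0:ℝ)..1, r ^ (N-1) * v r ^ q
        ≤ M * ∫ r in (0:ℝ)..1, r ^ (N-1) * v r ^ (q-1) := step1
      _ = M * ∫ r in (0:ℝ)..1, r ^ (N-1) * v r ^ (p-1) := by rw [hDD]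
      _ ≤ M * (M ^ (p-1) * (1/(N:ℝ))) := by
          apply mul_le_mul_of_nonneg_left step2 hM0.le
      _ = (q/p) ^ (p/(q-p)) * (1/(N:ℝ)) := by rw [← hMM]; ring
  constructor
  · -- first inequality
    have intL : IntervalIntegrable
        (fun r => r ^ (N-1) * (v' r ^ p / p + v r ^ p / p - v r ^ q / q))
        MeasureTheory.volume 0 1 := by
      apply ContinuousOn.intervalIntegrable; rw [huIcc]
      exact cpow.mul (((cv'p.div_const p).add (cvp.div_const p)).sub (cvq.div_const q))
    have := intervalIntegral.integral_mono_on zero_le_one intL (int1.const_mul (1/p))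
      (fun x hx => by
        have h1 : 0 ≤ x ^ (N-1) := pow_nonneg hx.1 _
        have h2 : 0 ≤ v x ^ q := Real.rpow_nonneg (hvpos x hx).le _
        have e : x ^ (N-1) * (v' x ^ p / p + v x ^ p / p - v x ^ q / q)
            = 1/p * (x ^ (N-1) * (v' x ^ p + v x ^ p)) - x ^ (N-1) * (v x ^ q / q) := by
          ring
        rw [e]
        have : 0 ≤ x ^ (N-1) * (v x ^ q / q) := by positivity
        linarith)
    rwa [intervalIntegral.integral_const_mul] at this
  · -- second inequality
    have h1p : 0 < 1/p := by positivity
    calc (1/p) * ∫ r in (0:ℝ)..1, r ^ (N-1) * (v' r ^ p + v r ^ p)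
        ≤ (1/p) * ((q/p) ^ (p/(q-p)) * (1/(N:ℝ))) :=
          mul_le_mul_of_nonneg_left main2 h1p.le
      _ = (1 / (p * (N:ℝ))) * (q/p) ^ (p/(q-p)) := by
          field_simp
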